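/- Kleene star solves the inequality Ax ⊕ b ≤ x: if all max-plus powers of A up to order n have nonpositive diagonal cycle weights (i.e., (Aᵐ)ᵢᵢ ≤ 0 for 1 ≤ m ≤ n), then x = A*u satisfies Ax ≤ x in the max-plus sense for every u ∈ ℝⁿ, where A* = I ⊕ A ⊕ ⋯ ⊕ A^{n-1}. -/

import Mathlib

noncomputable def msup {n : ℕ} (hn : 0 < n) (f : Fin n → ℝ) : ℝ :=
  Finset.univ.sup' (Finset.univ_nonempty_iff.mpr (Fin.pos_iff_nonempty.mp hn)) f

noncomputable def minf {n : ℕ} (hn : 0 < n) (f : Fin n → ℝ) : ℝ :=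
  Finset.univ.inf' (Finset.univ_nonempty_iff.mpr (Fin.pos_iff_nonempty.mp hn)) f

noncomputable def mpMul {n : ℕ} (hn : 0 < n) (A B : Fin n → Fin n → ℝ) :
    Fin n → Fin n → ℝ :=
  fun i j => msup hn (fun k => A i k + B k j)

noncomputable def mpPow {n : ℕ} (hn : 0 < n) (A : Fin n → Fin n → ℝ) : ℕ → Fin n → Fin n → ℝ
  | 0 => A
  | 1 => A
  | (m + 2) => mpMul hn A (mpPow hn A (m + 1))

noncomputable def bMul {n : ℕ} (A B : Fin n → Fin n → WithBot ℝ) :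
    Fin n → Fin n → WithBot ℝ :=
  fun i j => Finset.univ.sup fun k => A i k + B k j

def bId (n : ℕ) : Fin n → Fin n → WithBot ℝ := fun i j => if i = j then 0 else ⊥

noncomputable def bPow {n : ℕ} (A : Fin n → Fin n → WithBot ℝ) :
    ℕ → Fin n → Fin n → WithBot ℝ
  | 0 => bId n
  | m + 1 => bMul A (bPow A m)

noncomputable def bStar {n : ℕ} (A : Fin n → Fin n → WithBot ℝ) :
    Fin n → Fin n → WithBot ℝ :=
  fun i j => (Finset.range n).sup fun m => bPow A m i j

section aux
variable {n : ℕ} (A : Fin n → Fin n → ℝ)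

local notation "A'" => (fun i j => ((A i j : WithBot ℝ)) : Fin n → Fin n → WithBot ℝ)

lemma coe_add_sup {ι : Type*} (a : ℝ) (s : Finset ι) (f : ι → WithBot ℝ) :
    (a : WithBot ℝ) + s.sup f = s.sup (fun t => (a : WithBot ℝ) + f t) := by
  classical
  induction s using Finset.cons_induction with
  | empty => simp
  | cons x s hx ih =>
      rw [Finset.sup_cons, Finset.sup_cons, ← ih]
      exact Monotone.map_max (fun u v h => add_le_add_right h _)

lemma bPow_succ (m : ℕ) (B : Fin n → Fin n → WithBot ℝ) (i j : Fin n) :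
    bPow B (m + 1) i j = Finset.univ.sup fun k => B i k + bPow B m k j := rfl

lemma lemA : ∀ (m : ℕ) (p : ℕ → Fin n),
    ((∑ t ∈ Finset.range m, A (p (t+1)) (p t) : ℝ) : WithBot ℝ) ≤ bPow A' m (p m) (p 0) := by
  intro m
  induction m with
  | zero => intro p; simp [bPow, bId]
  | succ m ih =>
      intro p
      rw [Finset.sum_range_succ, WithBot.coe_add, add_comm, bPow_succ]
      have h1 : (A (p (m+1)) (p m) : WithBot ℝ) + bPow A' m (p m) (p 0) ≤
          Finset.univ.sup fun k => (A (p (m+1)) k : WithBot ℝ) + bPow A' m k (p 0) :=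
        Finset.le_sup (f := fun k => (A (p (m+1)) k : WithBot ℝ) + bPow A' m k (p 0))
          (Finset.mem_univ (p m))
      exact le_trans (add_le_add_right (ih p) _) h1

lemma lemB : ∀ (m : ℕ) (i j : Fin n) (C : ℝ),
    (∀ p : ℕ → Fin n, p 0 = j → p m = i →
      ((∑ t ∈ Finset.range m, A (p (t+1)) (p t) : ℝ) : WithBot ℝ) ≤ (C : WithBot ℝ)) →
    bPow A' m i j ≤ (C : WithBot ℝ) := by
  intro m
  induction m with
  | zero =>
      intro i j C h
      by_cases hij : i = j
      · subst hij
        have := h (fun _ => i) rfl rfl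
        simpa [bPow, bId] using this
      · simp [bPow, bId, hij]
  | succ m ih =>
      intro i j C h
      rw [bPow_succ]
      apply Finset.sup_le
      intro k _
      have hk : bPow A' m k j ≤ ((C - A i k : ℝ) : WithBot ℝ) := by
        apply ih
        intro p h0 hm
        have hsum : ∑ t ∈ Finset.range m,
            A (if t + 1 = m + 1 then i else p (t+1)) (if t = m + 1 then i else p t) =
            ∑ t ∈ Finset.range m, A (p (t+1)) (p t) := by
          apply Finset.sum_congr rfl
          intro t ht
          rw [Finset.mem_range] at ht
          rw [if_neg (by omega), if_neg (by omega)]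
        have hp' := h (fun t => if t = m + 1 then i else p t) (by simp [h0]) (by simp)
        rw [Finset.sum_range_succ, hsum] at hp'
        beta_reduce at hp'
        rw [show (if m + 1 = m + 1 then i else p (m+1)) = i from if_pos rfl,
          show (if m = m + 1 then i else p m) = p m from if_neg (by omega), hm] at hp'
        have : (∑ t ∈ Finset.range m, A (p (t+1)) (p t)) + A i k ≤ C := by
          exact_mod_cast hp'
        exact_mod_cast (by linarith : (∑ t ∈ Finset.range m, A (p (t+1)) (p t)) ≤ C - A i k)
      calc (A i k : WithBot ℝ) + bPow A' m k j
          ≤ (A i k : WithBot ℝ) + ((C - A i k : ℝ) : WithBot ℝ) := add_le_add_right hk _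
        _ = (C : WithBot ℝ) := by rw [← WithBot.coe_add]; norm_num

lemma star_coe (hn : 0 < n) (i j : Fin n) : ∃ S : ℝ, bStar A' i j = (S : WithBot ℝ) := by
  have hbot : bStar A' i j ≠ ⊥ := by
    rcases Nat.lt_or_ge 1 n with h2 | h1
    · have h1mem : 1 ∈ Finset.range n := Finset.mem_range.mpr h2
      have hle : (A i j : WithBot ℝ) ≤ bStar A' i j := by
        have e1 : (A i j : WithBot ℝ) ≤ bPow A' 1 i j := by
          rw [bPow_succ]
          have : (A i j : WithBot ℝ) + bPow A' 0 j j ≤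
              Finset.univ.sup fun k => (A i k : WithBot ℝ) + bPow A' 0 k j :=
            Finset.le_sup (f := fun k => (A i k : WithBot ℝ) + bPow A' 0 k j)
              (Finset.mem_univ j)
          simpa [bPow, bId] using this
        exact le_trans e1 (Finset.le_sup (f := fun m => bPow A' m i j) h1mem)
      intro hb
      rw [hb, le_bot_iff] at hle
      exact WithBot.coe_ne_bot hle
    · have hn1 : n = 1 := by omega
      have hij : i = j := by subst hn1; exact Subsingleton.elim i j
      subst hij
      have hle : (0 : WithBot ℝ) ≤ bStar A' i i := by
        have h0 : bPow A' 0 i i = 0 := by simp [bPow, bId]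
        rw [← h0]
        exact Finset.le_sup (f := fun m => bPow A' m i i) (Finset.mem_range.mpr hn)
      intro hb
      rw [hb, le_bot_iff] at hle
      simp at hle
  rcases WithBot.ne_bot_iff_exists.mp hbot with ⟨S, hS⟩
  exact ⟨S, hS.symm⟩

lemma pow_n_le_star (hn : 0 < n)
    (hTr : ∀ m, 1 ≤ m → m ≤ n → ∀ i, bPow A' m i i ≤ 0) (i j : Fin n) :
    bPow A' n i j ≤ bStar A' i j := by
  obtain ⟨S, hS⟩ := star_coe A hn i j
  rw [hS]
  apply lemB
  intro p h0 hm'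
  -- pigeonhole
  obtain ⟨x, y, hxy, hpxy⟩ := Fintype.exists_ne_map_eq_of_card_lt
    (fun t : Fin (n+1) => p (t : ℕ)) (by simp)
  obtain ⟨a, b, hab, hbn, hpab⟩ : ∃ a b : ℕ, a < b ∧ b ≤ n ∧ p a = p b := by
    rcases lt_or_gt_of_ne hxy with h | h
    · exact ⟨x, y, h, Nat.lt_succ_iff.mp y.isLt, hpxy⟩
    · exact ⟨y, x, h, Nat.lt_succ_iff.mp x.isLt, hpxy.symm⟩
  set c := b - a with hc
  have hc1 : 1 ≤ c := by omega
  have hcn : c ≤ n := by omega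
  have hbac : b = a + c := by omega
  set w : ℕ → ℝ := fun t => A (p (t+1)) (p t) with hw
  -- cycle bound
  have hcyc : ((∑ t ∈ Finset.range c, w (a + t) : ℝ) : WithBot ℝ) ≤ 0 := by
    have h1 := lemA A c (fun t => p (a + t))
    rw [show a + c = b from hbac.symm, ← hpab, Nat.add_zero] at h1
    have h2 := hTr c hc1 hcn (p a)
    refine le_trans (le_trans (le_of_eq ?_) h1) h2
    norm_cast
  -- shortcut path
  set q : ℕ → Fin n := fun t => if t ≤ a then p t else p (t + c) with hq
  have hq0 : q 0 = j := by simp only [hq, if_pos (Nat.zero_le a)]; exact h0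
  have hqe : q (n - c) = i := by
    by_cases hnc : n - c ≤ a
    · have h1 : n - c = a := by omega
      have h2 : q (n - c) = p a := by rw [h1]; simp [hq]
      have hbn' : b = n := by omega
      rw [h2, hpab, hbn', hm']
    · simp only [hq, if_neg hnc]
      rw [show n - c + c = n from by omega, hm']
  have hshort : ((∑ t ∈ Finset.range (n - c), A (q (t+1)) (q t) : ℝ) : WithBot ℝ) ≤
      bPow A' (n - c) i j := by
    have h1 := lemA A (n - c) q
    rwa [hqe, hq0] at h1
  -- edge values of q
  have hqedge : ∀ t, A (q (t+1)) (q t) = if t < a then w t else w (t + c) := by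
    intro t
    by_cases ht : t < a
    · rw [if_pos ht]
      simp only [hq, hw]
      rw [if_pos (by omega), if_pos (by omega)]
    · rw [if_neg ht]
      simp only [hq, hw]
      rw [if_neg (by omega)]
      by_cases hta : t = a
      · subst hta
        rw [if_pos le_rfl, hpab, hbac]
        congr 2
        omega
      · rw [if_neg (by omega)]
        congr 2
        omega
  -- sum decomposition
  have hsplit : ∑ t ∈ Finset.range n, w t =
      (∑ t ∈ Finset.range (n - c), A (q (t+1)) (q t)) + ∑ t ∈ Finset.range c, w (a + t) := by
    have hanc : a ≤ n - c := by omega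
    have e1 : ∑ t ∈ Finset.range (n - c), A (q (t+1)) (q t) =
        (∑ t ∈ Finset.Ico 0 a, w t) + ∑ t ∈ Finset.Ico b n, w t := by
      rw [Finset.range_eq_Ico, ← Finset.sum_Ico_consecutive _ (Nat.zero_le a) hanc]
      congr 1
      · apply Finset.sum_congr rfl
        intro t ht
        rw [Finset.mem_Ico] at ht
        rw [hqedge, if_pos ht.2]
      · rw [Finset.sum_Ico_eq_sum_range, Finset.sum_Ico_eq_sum_range]
        rw [show n - b = (n - c) - a from by omega]
        apply Finset.sum_congr rfl
        intro t _
        rw [hqedge, if_neg (by omega)]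
        congr 1
        omega
    have e2 : ∑ t ∈ Finset.range c, w (a + t) = ∑ t ∈ Finset.Ico a b, w t := by
      rw [Finset.sum_Ico_eq_sum_range]
    rw [e1, e2, Finset.range_eq_Ico,
      ← Finset.sum_Ico_consecutive w (Nat.zero_le a) (le_trans (le_of_lt hab) hbn),
      ← Finset.sum_Ico_consecutive w (le_of_lt hab) hbn]
    ring
  calc ((∑ t ∈ Finset.range n, w t : ℝ) : WithBot ℝ)
      = ((∑ t ∈ Finset.range (n - c), A (q (t+1)) (q t) : ℝ) : WithBot ℝ)
        + ((∑ t ∈ Finset.range c, w (a + t) : ℝ) : WithBot ℝ) := by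
        rw [hsplit, WithBot.coe_add]
    _ ≤ bPow A' (n - c) i j + 0 := add_le_add hshort hcyc
    _ = bPow A' (n - c) i j := add_zero _
    _ ≤ bStar A' i j := Finset.le_sup (f := fun m => bPow A' m i j)
        (Finset.mem_range.mpr (by omega))
    _ = (S : WithBot ℝ) := hS

lemma pow_le_star (hn : 0 < n)
    (hTr : ∀ m, 1 ≤ m → m ≤ n → ∀ i, bPow A' m i i ≤ 0) :
    ∀ m, m ≤ n → ∀ i j, bPow A' m i j ≤ bStar A' i j := by
  intro m hm i j
  rcases Nat.lt_or_ge m n with hlt | hge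
  · exact Finset.le_sup (f := fun m => bPow A' m i j) (Finset.mem_range.mpr hlt)
  · rw [le_antisymm hm hge]
    exact pow_n_le_star A hn hTr i j

end aux

theorem stmt11 {n : ℕ} (hn : 0 < n) (A : Fin n → Fin n → ℝ)
    (A' : Fin n → Fin n → WithBot ℝ) (hA' : ∀ i j, A' i j = (A i j : WithBot ℝ))
    (hTr : ∀ m, 1 ≤ m → m ≤ n → ∀ i, bPow A' m i i ≤ 0) :
    ∀ u : Fin n → ℝ,
      ∀ x : Fin n → WithBot ℝ,
        (∀ i, x i = Finset.univ.sup fun j => bStar A' i j + (u j : WithBot ℝ)) →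
        ∀ i, (Finset.univ.sup fun j => A' i j + x j) ≤ x i := by
  have hAe : A' = fun i j => (A i j : WithBot ℝ) := by funext i j; exact hA' i j
  subst hAe
  intro u x hx i
  apply Finset.sup_le
  intro j _
  rw [hx j, coe_add_sup]
  apply Finset.sup_le
  intro k _
  have key : (A i j : WithBot ℝ) + bStar (fun i j => (A i j : WithBot ℝ)) j k ≤
      bStar (fun i j => (A i j : WithBot ℝ)) i k := by
    rw [bStar, coe_add_sup]
    apply Finset.sup_le
    intro m hm
    rw [Finset.mem_range] at hm
    have h1 : (A i j : WithBot ℝ) + bPow (fun i j => (A i j : WithBot ℝ)) m j k ≤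
        bPow (fun i j => (A i j : WithBot ℝ)) (m+1) i k := by
      rw [bPow_succ]
      exact Finset.le_sup (f := fun k' => (A i k' : WithBot ℝ) +
        bPow (fun i j => (A i j : WithBot ℝ)) m k' k) (Finset.mem_univ j)
    exact le_trans h1 (pow_le_star A hn hTr (m+1) hm i k)
  rw [hx i, ← add_assoc]
  have h2 : bStar (fun i j => (A i j : WithBot ℝ)) i k + (u k : WithBot ℝ) ≤
      Finset.univ.sup fun j => bStar (fun i j => (A i j : WithBot ℝ)) i j + (u j : WithBot ℝ) :=
    Finset.le_sup (f := fun j => bStar (fun i j => (A i j : WithBot ℝ)) i j + (u j : WithBot ℝ))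
      (Finset.mem_univ k)
  exact le_trans (add_le_add_left key _) h2
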